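/- Let φ, ψ : (0,∞) → ℝ admit affine minorants and suppose ψ ∉ Φ₃ (i.e. either liminf_{x→∞} ψ(x)/x = +∞, or this liminf â_ψ is finite and liminf_{x→∞}(ψ(x) - â_ψ x) = -∞). If (φ(x) - ψ(x)) → +∞ as x → +∞, then (φ**(x) - ψ**(x)) → +∞ as x → +∞. -/

import Mathlib

open Filter Set Topology

/-- `φ` admits an affine minorant on `(0,∞)`. -/
def AffBdd (φ : ℝ → ℝ) : Prop := ∃ a b : ℝ, ∀ x > 0, a * x + b ≤ φ x

/-- The biconjugate of `φ` on `(0,∞)`: the pointwise supremum of all affine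
minorants of `φ` on `(0,∞)`, i.e. the largest convex minorant of `φ`. -/
noncomputable def biconj (φ : ℝ → ℝ) (x : ℝ) : ℝ :=
  sSup {y : ℝ | ∃ a b : ℝ, (∀ t > 0, a * t + b ≤ φ t) ∧ y = a * x + b}

lemma biconj_ge (φ : ℝ → ℝ) {a b x : ℝ} (hx : 0 < x)
    (h : ∀ t > 0, a * t + b ≤ φ t) : a * x + b ≤ biconj φ x := by
  apply le_csSup
  · exact ⟨φ x, by rintro y ⟨a', b', h', rfl⟩; exact h' x hx⟩
  · exact ⟨a, b, h, rfl⟩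

/-- If `ψ x ≥ s x` for large `x` and `ψ` has an affine minorant, then `biconj ψ`
dominates some line of slope `s`. -/
lemma biconj_ge_slope (ψ : ℝ → ℝ) (hψ : AffBdd ψ) {s R : ℝ} (hR : 0 < R)
    (h : ∀ t ≥ R, s * t ≤ ψ t) :
    ∃ c, ∀ x > 0, s * x + c ≤ biconj ψ x := by
  obtain ⟨a₁, b₁, h₁⟩ := hψ
  set c := min 0 (min b₁ ((a₁ - s) * R + b₁)) with hc
  refine ⟨c, fun x hx => biconj_ge ψ hx ?_⟩
  intro t ht
  rcases le_or_gt R t with hth | hth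
  · have h2 := h t hth
    have h3 : c ≤ 0 := min_le_left _ _
    linarith
  · have h2 := h₁ t ht
    have h3 : c ≤ (a₁ - s) * t + b₁ := by
      rcases le_or_gt 0 (a₁ - s) with hcs | hcs
      · have : c ≤ b₁ := le_trans (min_le_right _ _) (min_le_left _ _)
        nlinarith
      · have : c ≤ (a₁ - s) * R + b₁ := le_trans (min_le_right _ _) (min_le_right _ _)
        nlinarith
    linarith

/-- From a slope strictly below the liminf of `ψ x / x`, extract a linear lower
bound for `biconj ψ`. -/
lemma slope_lb (ψ : ℝ → ℝ) (hψ : AffBdd ψ) {s : ℝ}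
    (h : (s : EReal) < Filter.liminf (fun x => ((ψ x / x : ℝ) : EReal)) atTop) :
    ∃ c, ∀ x > 0, s * x + c ≤ biconj ψ x := by
  have hev := Filter.eventually_lt_of_lt_liminf h
  obtain ⟨R₂, hR₂⟩ := eventually_atTop.1 hev
  have hpos : (0:ℝ) < max R₂ 1 := lt_of_lt_of_le one_pos (le_max_right _ _)
  apply biconj_ge_slope ψ hψ hpos
  intro t ht
  have ht0 : 0 < t := lt_of_lt_of_le hpos ht
  have h1 := hR₂ t (le_trans (le_max_left _ _) ht)
  have h2 : s < ψ t / t := by exact_mod_cast h1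
  exact le_of_lt ((lt_div_iff₀ ht0).1 h2)

/-- Key lemma: if `ψ ∉ Φ₃`, then near-optimal affine minorants of `ψ` at large
points are arbitrarily low on `(0, R]`. -/
lemma key_low (ψ : ℝ → ℝ) (hψ : AffBdd ψ)
    (hnot3 : Filter.liminf (fun x => ((ψ x / x : ℝ) : EReal)) atTop = ⊤ ∨
      ∃ a : ℝ, Filter.liminf (fun x => ((ψ x / x : ℝ) : EReal)) atTop = (a : EReal) ∧
        Filter.liminf (fun x => ((ψ x - a * x : ℝ) : EReal)) atTop = ⊥)
    {R : ℝ} (hR : 0 < R) (C : ℝ) :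
    ∃ X, ∀ x ≥ X, ∀ a b, (∀ t > 0, a * t + b ≤ ψ t) →
      biconj ψ x - 1 ≤ a * x + b → b ≤ C ∧ a * R + b ≤ C := by
  rcases hnot3 with htop | ⟨a, hle, hbot⟩
  · -- Case A : liminf ψ x / x = ⊤
    set T := R + 1 with hT
    have hT0 : 0 < T := by linarith
    set A₀ := max (ψ T - C) ((ψ T - C) / T) with hA₀
    set s := max A₀ 0 + 1 with hs
    have hsl : ((s : ℝ) : EReal) < Filter.liminf (fun x => ((ψ x / x : ℝ) : EReal)) atTop := by
      rw [htop]; exact EReal.coe_lt_top s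
    obtain ⟨c, hc⟩ := slope_lb ψ hψ hsl
    refine ⟨max (T + 1) (ψ T + 1 - c - A₀ * T), fun x hx a b hab hnear => ?_⟩
    have hxT : T + 1 ≤ x := le_trans (le_max_left _ _) hx
    have hx2 : ψ T + 1 - c - A₀ * T ≤ x := le_trans (le_max_right _ _) hx
    have hx0 : 0 < x := by linarith
    have h1 : s * x + c ≤ biconj ψ x := hc x hx0
    have hsA : A₀ + 1 ≤ s := by
      have h := le_max_left A₀ 0
      rw [hs]; linarith
    have h2 : ψ T + A₀ * (x - T) ≤ a * x + b := by
      nlinarith [mul_le_mul_of_nonneg_right hsA hx0.le]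
    have h3 : a * T + b ≤ ψ T := hab T hT0
    have ha : A₀ ≤ a := by
      have h4 : A₀ * (x - T) ≤ a * (x - T) := by nlinarith
      have h5 : 0 < x - T := by linarith
      exact le_of_mul_le_mul_right (by linarith [h4]) h5
    constructor
    · have h5 : (ψ T - C) / T ≤ A₀ := le_max_right _ _
      have h6 : ψ T - C ≤ A₀ * T := by
        rw [div_le_iff₀ hT0] at h5; linarith
      nlinarith [mul_le_mul_of_nonneg_right ha hT0.le]
    · have h5 : ψ T - C ≤ A₀ := le_max_left _ _
      have h7 : a * T = a * R + a := by rw [hT]; ring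
      linarith
  · -- Case B : liminf ψ x / x = a, liminf (ψ x - a x) = ⊥
    have hfreq : ∃ᶠ x in atTop,
        ((ψ x - a * x : ℝ) : EReal) < ((C - 2 - |a| * R : ℝ) : EReal) := by
      have hco : IsCoboundedUnder (· ≥ ·) atTop (fun x => ((ψ x - a * x : ℝ) : EReal)) :=
        Filter.isCobounded_ge_of_top
      have hlt : Filter.liminf (fun x => ((ψ x - a * x : ℝ) : EReal)) atTop <
          ((C - 2 - |a| * R : ℝ) : EReal) := by
        rw [hbot]; exact EReal.bot_lt_coe _
      exact Filter.frequently_lt_of_liminf_lt hco hlt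
    obtain ⟨t₀, hDlt', ht₀R⟩ := (hfreq.and_eventually (eventually_ge_atTop (R + 1))).exists
    have ht₀0 : 0 < t₀ := by linarith
    have hDlt : ψ t₀ - a * t₀ ≤ C - 2 - |a| * R := le_of_lt (by exact_mod_cast hDlt')
    set ε := 1 / t₀ with hε
    have hε0 : 0 < ε := by positivity
    have hεt₀ : ε * t₀ = 1 := by rw [hε, one_div, inv_mul_cancel₀ ht₀0.ne']
    have hsl : ((a - ε : ℝ) : EReal) < Filter.liminf (fun x => ((ψ x / x : ℝ) : EReal)) atTop := by
      rw [hle]; exact_mod_cast sub_lt_self a hε0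
    obtain ⟨c, hc⟩ := slope_lb ψ hψ hsl
    refine ⟨max (t₀ + 1) ((1 + ψ t₀ - c - (a - 2 * ε) * t₀) / ε),
      fun x hx a' b' hab hnear => ?_⟩
    have hx1 : t₀ + 1 ≤ x := le_trans (le_max_left _ _) hx
    have hx2 : (1 + ψ t₀ - c - (a - 2 * ε) * t₀) / ε ≤ x := le_trans (le_max_right _ _) hx
    have hx3 : 1 + ψ t₀ - c - (a - 2 * ε) * t₀ ≤ ε * x := by
      rw [div_le_iff₀ hε0] at hx2; linarith [hx2]
    have hx0 : 0 < x := by linarith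
    have h1 : (a - ε) * x + c ≤ biconj ψ x := hc x hx0
    have h2 : (a - ε) * x + c - 1 ≤ a' * x + b' := by linarith
    have h3 : a' * t₀ + b' ≤ ψ t₀ := hab t₀ ht₀0
    have ha' : a - 2 * ε ≤ a' := by
      have h4 : (a - 2 * ε) * (x - t₀) ≤ a' * (x - t₀) := by nlinarith
      have h5 : 0 < x - t₀ := by linarith
      exact le_of_mul_le_mul_right (by linarith [h4]) h5
    have habs : a * R ≤ |a| * R := mul_le_mul_of_nonneg_right (le_abs_self a) hR.le
    have habs0 : 0 ≤ |a| * R := mul_nonneg (abs_nonneg a) hR.le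
    constructor
    · have hmul : (a - a') * t₀ ≤ (2 * ε) * t₀ :=
        mul_le_mul_of_nonneg_right (by linarith) ht₀0.le
      nlinarith
    · have hmul2 : a' * (R - t₀) ≤ (a - 2 * ε) * (R - t₀) :=
        mul_le_mul_of_nonpos_right ha' (by linarith)
      have hεR : 0 ≤ ε * R := mul_nonneg hε0.le hR.le
      nlinarith

theorem stmt_17 (φ ψ : ℝ → ℝ) (hφ : AffBdd φ) (hψ : AffBdd ψ)
    (hnot3 : Filter.liminf (fun x => ((ψ x / x : ℝ) : EReal)) atTop = ⊤ ∨
      ∃ a : ℝ, Filter.liminf (fun x => ((ψ x / x : ℝ) : EReal)) atTop = (a : EReal) ∧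
        Filter.liminf (fun x => ((ψ x - a * x : ℝ) : EReal)) atTop = ⊥)
    (hlim : Tendsto (fun x => φ x - ψ x) atTop atTop) :
    Tendsto (fun x => biconj φ x - biconj ψ x) atTop atTop := by
  rw [tendsto_atTop]
  intro M
  -- φ ≥ ψ + (M+1) beyond some R₀
  obtain ⟨R₀, hR₀⟩ := eventually_atTop.1 (tendsto_atTop.1 hlim (M + 1))
  set R := max R₀ 1 with hRdef
  have hR : (0:ℝ) < R := lt_of_lt_of_le one_pos (le_max_right _ _)
  obtain ⟨a₀, b₀, h₀⟩ := hφ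
  set C := min b₀ (a₀ * R + b₀) - (M + 1) with hC
  obtain ⟨X, hX⟩ := key_low ψ hψ hnot3 hR C
  rw [eventually_atTop]
  refine ⟨max X 1, fun x hx => ?_⟩
  have hx0 : (0:ℝ) < x := lt_of_lt_of_le one_pos (le_trans (le_max_right _ _) hx)
  have hxX : X ≤ x := le_trans (le_max_left _ _) hx
  -- a near-optimal minorant of ψ at x
  obtain ⟨a₁, b₁, hψ₁⟩ := hψ
  have hne : {y : ℝ | ∃ a b : ℝ, (∀ t > 0, a * t + b ≤ ψ t) ∧ y = a * x + b}.Nonempty :=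
    ⟨a₁ * x + b₁, a₁, b₁, hψ₁, rfl⟩
  obtain ⟨y, hy, hylt⟩ := exists_lt_of_lt_csSup hne (sub_one_lt (biconj ψ x))
  obtain ⟨a, b, hab, rfl⟩ := hy
  have hnear : biconj ψ x - 1 ≤ a * x + b := le_of_lt hylt
  obtain ⟨hb, haRb⟩ := hX x hxX a b hab hnear
  -- (a, b + (M+1)) is an affine minorant of φ
  have hφmin : ∀ t > 0, a * t + (b + (M + 1)) ≤ φ t := by
    intro t ht
    rcases le_or_gt R t with htR | htR
    · have h1 : M + 1 ≤ φ t - ψ t := hR₀ t (le_trans (le_max_left _ _) htR)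
      have h2 : a * t + b ≤ ψ t := hab t ht
      linarith
    · have h2 : a * t + b ≤ C := by
        rcases le_or_gt 0 a with ha | ha
        · nlinarith
        · nlinarith
      have h3 : min b₀ (a₀ * R + b₀) ≤ a₀ * t + b₀ := by
        rcases le_or_gt 0 a₀ with ha₀ | ha₀
        · have := min_le_left b₀ (a₀ * R + b₀); nlinarith
        · have := min_le_right b₀ (a₀ * R + b₀); nlinarith
      have h4 := h₀ t ht
      rw [hC] at h2
      linarith
  have h5 : a * x + (b + (M + 1)) ≤ biconj φ x := biconj_ge φ hx0 hφmin
  linarith
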